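/- The minimum occurrence is extendable to a maximum nonoverlapping family: if a pattern p has at least one occurrence in sequence s, then the lexicographically minimal occurrence l* of p in s is contained in some maximum-cardinality family of pairwise nonoverlapping occurrences of p in s. -/

import Mathlib

/-- `IsOcc s p l` : `l` is an occurrence of pattern `p` in sequence `s`:
a strictly increasing list of indices into `s`, of the same length as `p`,
with coordinatewise containment of the pattern itemsets. -/
def IsOcc (s p : List (Finset ℕ)) (l : List ℕ) : Prop :=
  l.length = p.length ∧ l.Chain' (· < ·) ∧ (∀ x ∈ l, x < s.length) ∧
  ∀ k, k < p.length → p.getD k ∅ ⊆ s.getD (l.getD k 0) ∅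

/-- Two occurrences are nonoverlapping iff they differ at every coordinate. -/
def NonOverlap (l l' : List ℕ) : Prop :=
  ∀ k, k < l.length → l.getD k 0 ≠ l'.getD k 0

/-- `supp s p` : the maximum cardinality of a family of pairwise
nonoverlapping occurrences of `p` in `s`. -/
noncomputable def supp (s p : List (Finset ℕ)) : ℕ :=
  sSup {k | ∃ F : Finset (List ℕ), F.card = k ∧ (∀ l ∈ F, IsOcc s p l) ∧
    (F : Set (List ℕ)).Pairwise NonOverlap}

/-- Support of a pattern in a database: sum of supports over the sequences. -/
noncomputable def suppD (D : List (List (Finset ℕ))) (p : List (Finset ℕ)) : ℕ :=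
  (D.map (fun s => supp s p)).sum

attribute [local instance] Classical.propDecidable

/- auxiliary lemmas -/

lemma getD_zipWith' (f : ℕ → ℕ → ℕ) {a b : List ℕ} {k : ℕ}
    (hk : k < a.length) (hk' : k < b.length) :
    (List.zipWith f a b).getD k 0 = f (a.getD k 0) (b.getD k 0) := by
  rw [List.getD_eq_getElem _ _ (by simp; omega), List.getElem_zipWith,
      List.getD_eq_getElem _ _ hk, List.getD_eq_getElem _ _ hk']

lemma chain_getD {l : List ℕ} (h : l.Chain' (· < ·)) {i j : ℕ}
    (hij : i < j) (hj : j < l.length) : l.getD i 0 < l.getD j 0 := by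
  have hp := List.pairwise_iff_getElem.mp (List.isChain_iff_pairwise.mp h)
  have hi : i < l.length := lt_trans hij hj
  rw [List.getD_eq_getElem _ _ hi, List.getD_eq_getElem _ _ hj]
  exact hp i j hi hj hij

lemma isOcc_zipWith {s p : List (Finset ℕ)} {a b : List ℕ} (f : ℕ → ℕ → ℕ)
    (hf : ∀ x y, f x y = x ∨ f x y = y)
    (hmono : ∀ x x' y y', x < x' → y < y' → f x y < f x' y')
    (ha : IsOcc s p a) (hb : IsOcc s p b) : IsOcc s p (List.zipWith f a b) := by
  obtain ⟨la, ca, bnda, sa⟩ := ha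
  obtain ⟨lb, cb, bndb, sb⟩ := hb
  have hlen : (List.zipWith f a b).length = p.length := by simp [la, lb]
  refine ⟨hlen, ?_, ?_, ?_⟩
  · rw [show List.Chain' _ (List.zipWith f a b) ↔ List.IsChain _ _ from Iff.rfl,
      List.isChain_iff_pairwise, List.pairwise_iff_getElem]
    intro i j hi hj hij
    simp only [List.getElem_zipWith]
    apply hmono
    · have := chain_getD ca (i := i) (j := j) hij (by simp at hi; omega)
      rwa [List.getD_eq_getElem, List.getD_eq_getElem] at this
    · have := chain_getD cb (i := i) (j := j) hij (by simp at hj; omega)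
      rwa [List.getD_eq_getElem, List.getD_eq_getElem] at this
  · intro x hx
    obtain ⟨k, hk, rfl⟩ := List.mem_iff_getElem.mp hx
    rw [List.getElem_zipWith]
    rcases hf (a[k]'(by simp at hk; omega)) (b[k]'(by simp at hk; omega)) with h | h <;> rw [h]
    · exact bnda _ (List.getElem_mem _)
    · exact bndb _ (List.getElem_mem _)
  · intro k hk
    rw [getD_zipWith' f (by omega) (by omega)]
    rcases hf (a.getD k 0) (b.getD k 0) with h | h <;> rw [h]
    · exact sa k hk
    · exact sb k hk

lemma lex_le_coord : ∀ (a b : List ℕ), List.Lex (· < ·) a b → a.length = b.length →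
    (∀ k, k < a.length → b.getD k 0 ≤ a.getD k 0) → False := by
  intro a
  induction a with
  | nil => intro b h hlen _; cases h; simp at hlen
  | cons x t ih =>
    intro b h hlen hle
    cases h with
    | cons h' =>
      exact ih _ h' (by simpa using hlen)
        (fun k hk => by simpa using hle (k + 1) (by simpa using hk))
    | rel hxy =>
      have := hle 0 (by simp)
      simp at this hxy
      omega

lemma nonOverlap_symm {a b : List ℕ} (hlen : a.length = b.length)
    (h : NonOverlap a b) : NonOverlap b a :=
  fun k hk => Ne.symm (h k (by omega))

lemma lstar_coord_min {s p : List (Finset ℕ)} {lstar : List ℕ} (h1 : IsOcc s p lstar)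
    (hmin : ∀ l, IsOcc s p l → lstar = l ∨ List.Lex (· < ·) lstar l)
    {l : List ℕ} (hl : IsOcc s p l) :
    ∀ k, k < p.length → lstar.getD k 0 ≤ l.getD k 0 := by
  intro k hk
  have hocc : IsOcc s p (List.zipWith min lstar l) :=
    isOcc_zipWith min (fun x y => min_choice x y)
      (fun x x' y y' hx hy => lt_min (lt_of_le_of_lt (min_le_left _ _) hx)
        (lt_of_le_of_lt (min_le_right _ _) hy)) h1 hl
  have hg : ∀ j, j < p.length →
      (List.zipWith min lstar l).getD j 0 = min (lstar.getD j 0) (l.getD j 0) :=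
    fun j hj => getD_zipWith' min (by have := h1.1; omega) (by have := hl.1; omega)
  rcases hmin _ hocc with h | h
  · have h2 := hg k hk
    rw [← h] at h2
    exact le_of_eq_of_le h2 (min_le_right _ _)
  · exfalso
    refine lex_le_coord _ _ h (by rw [h1.1, hocc.1]) (fun j hj => ?_)
    rw [hg j (by have := h1.1; omega)]
    exact min_le_left _ _

lemma bddS (s p : List (Finset ℕ)) :
    BddAbove {k | ∃ F : Finset (List ℕ), F.card = k ∧ (∀ l ∈ F, IsOcc s p l) ∧
      (F : Set (List ℕ)).Pairwise NonOverlap} := by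
  refine ⟨max s.length 1, ?_⟩
  rintro k ⟨F, rfl, hocc, hpw⟩
  by_cases hp : p.length = 0
  · have hsub : F ⊆ {([] : List ℕ)} := by
      intro l hl
      have h := (hocc l hl).1
      rw [hp, List.length_eq_zero_iff] at h
      simp [h]
    have := Finset.card_le_card hsub
    simp at this
    omega
  · have hmaps : ∀ a ∈ F, a.getD 0 0 ∈ Finset.range s.length := by
      intro a ha
      obtain ⟨la, _, hb, _⟩ := hocc a ha
      have h0 : 0 < a.length := by omega
      rw [Finset.mem_range, List.getD_eq_getElem _ _ h0]
      exact hb _ (List.getElem_mem h0)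
    have hinj : Set.InjOn (fun l : List ℕ => l.getD 0 0) ↑F := by
      intro a ha b hb hab
      by_contra hne
      have := hpw ha hb hne 0 (by rw [(hocc a (Finset.mem_coe.mp ha)).1]; omega)
      exact this hab
    have := Finset.card_le_card_of_injOn _ hmaps hinj
    simp at this
    omega

lemma insert_lstar {s p : List (Finset ℕ)} {lstar : List ℕ} (h1 : IsOcc s p lstar)
    (G : Finset (List ℕ)) (hocc : ∀ l ∈ G, IsOcc s p l)
    (hpw : (G : Set (List ℕ)).Pairwise NonOverlap)
    (hno : ∀ l ∈ G, NonOverlap lstar l) (hnm : lstar ∉ G) :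
    lstar ∈ insert lstar G ∧ (∀ l ∈ insert lstar G, IsOcc s p l) ∧
    ((insert lstar G : Finset (List ℕ)) : Set (List ℕ)).Pairwise NonOverlap ∧
    (insert lstar G).card = G.card + 1 := by
  refine ⟨Finset.mem_insert_self _ _, ?_, ?_, Finset.card_insert_of_notMem hnm⟩
  · intro l hl
    rcases Finset.mem_insert.mp hl with rfl | hl
    · exact h1
    · exact hocc l hl
  · intro a ha b hb hne
    rw [Finset.coe_insert, Set.mem_insert_iff] at ha hb
    rcases ha with rfl | ha <;> rcases hb with rfl | hb
    · exact absurd rfl hne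
    · exact hno b (Finset.mem_coe.mp hb)
    · exact nonOverlap_symm (by rw [h1.1, (hocc a (Finset.mem_coe.mp ha)).1])
        (hno a (Finset.mem_coe.mp ha))
    · exact hpw ha hb hne

lemma exchange (s p : List (Finset ℕ)) (lstar : List ℕ) (h1 : IsOcc s p lstar)
    (hco : ∀ l, IsOcc s p l → ∀ k, k < p.length → lstar.getD k 0 ≤ l.getD k 0) :
    ∀ n (F : Finset (List ℕ)),
      (F.filter (fun l => ¬ NonOverlap lstar l)).card ≤ n →
      (∀ l ∈ F, IsOcc s p l) → (F : Set (List ℕ)).Pairwise NonOverlap →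
      ∃ F' : Finset (List ℕ), lstar ∈ F' ∧ (∀ l ∈ F', IsOcc s p l) ∧
        (F' : Set (List ℕ)).Pairwise NonOverlap ∧ F.card ≤ F'.card := by
  intro n
  induction n with
  | zero =>
    intro F hcard hocc hpw
    by_cases hls : lstar ∈ F
    · exact ⟨F, hls, hocc, hpw, le_rfl⟩
    have hno : ∀ l ∈ F, NonOverlap lstar l := by
      intro l hl
      by_contra hc
      have hmem : l ∈ F.filter (fun l => ¬ NonOverlap lstar l) :=
        Finset.mem_filter.mpr ⟨hl, hc⟩
      have hpos := Finset.card_pos.mpr ⟨l, hmem⟩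
      omega
    obtain ⟨m1, m2, m3, m4⟩ := insert_lstar h1 F hocc hpw hno hls
    exact ⟨insert lstar F, m1, m2, m3, by omega⟩
  | succ n ih =>
    intro F hcard hocc hpw
    by_cases hls : lstar ∈ F
    · exact ⟨F, hls, hocc, hpw, le_rfl⟩
    set O := F.filter (fun l => ¬ NonOverlap lstar l) with hO
    by_cases hempty : ∀ l ∈ F, NonOverlap lstar l
    · obtain ⟨m1, m2, m3, m4⟩ := insert_lstar h1 F hocc hpw hempty hls
      exact ⟨insert lstar F, m1, m2, m3, by omega⟩
    push_neg at hempty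
    obtain ⟨l0, hl0F, hl0ov⟩ := hempty
    by_cases htwo : ∃ l1 ∈ F, l1 ≠ l0 ∧ ¬ NonOverlap lstar l1
    · obtain ⟨l1, hl1F, hl1ne, hl1ov⟩ := htwo
      have hocc0 := hocc l0 hl0F
      have hocc1 := hocc l1 hl1F
      have hlen0 : l0.length = p.length := hocc0.1
      have hlen1 : l1.length = p.length := hocc1.1
      have hlenls : lstar.length = p.length := h1.1
      have hplen : 0 < p.length := by
        by_contra hp
        apply hl1ne
        have e0 : l0 = [] := List.length_eq_zero_iff.mp (by omega)
        have e1 : l1 = [] := List.length_eq_zero_iff.mp (by omega)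
        rw [e0, e1]
      have hnol : NonOverlap l1 l0 :=
        hpw (Finset.mem_coe.mpr hl1F) (Finset.mem_coe.mpr hl0F) hl1ne
      have hne01 : ∀ k, k < p.length → l0.getD k 0 ≠ l1.getD k 0 :=
        fun k hk => Ne.symm (hnol k (by omega))
      set mn := List.zipWith min l0 l1 with hmn
      set mx := List.zipWith max l0 l1 with hmx
      have hoccmn : IsOcc s p mn := isOcc_zipWith min (fun x y => min_choice x y)
        (fun x x' y y' hx hy => lt_min (lt_of_le_of_lt (min_le_left _ _) hx)
          (lt_of_le_of_lt (min_le_right _ _) hy)) hocc0 hocc1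
      have hoccmx : IsOcc s p mx := isOcc_zipWith max (fun x y => max_choice x y)
        (fun x x' y y' hx hy => max_lt_max hx hy) hocc0 hocc1
      have hlenmn : mn.length = p.length := hoccmn.1
      have hlenmx : mx.length = p.length := hoccmx.1
      have hgmn : ∀ k, k < p.length → mn.getD k 0 = min (l0.getD k 0) (l1.getD k 0) :=
        fun k hk => getD_zipWith' min (by omega) (by omega)
      have hgmx : ∀ k, k < p.length → mx.getD k 0 = max (l0.getD k 0) (l1.getD k 0) :=
        fun k hk => getD_zipWith' max (by omega) (by omega)
      have hmnvs : ∀ l2 ∈ F, l2 ≠ l0 → l2 ≠ l1 → NonOverlap mn l2 := by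
        intro l2 h2F h2ne0 h2ne1 k hk
        have hk' : k < p.length := by omega
        have h02 : l0.getD k 0 ≠ l2.getD k 0 :=
          hpw (Finset.mem_coe.mpr hl0F) (Finset.mem_coe.mpr h2F) (Ne.symm h2ne0) k (by omega)
        have h12 : l1.getD k 0 ≠ l2.getD k 0 :=
          hpw (Finset.mem_coe.mpr hl1F) (Finset.mem_coe.mpr h2F) (Ne.symm h2ne1) k (by omega)
        rw [hgmn k hk']
        rcases min_choice (l0.getD k 0) (l1.getD k 0) with h | h <;> rw [h] <;> assumption
      have hmxvs : ∀ l2 ∈ F, l2 ≠ l0 → l2 ≠ l1 → NonOverlap mx l2 := by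
        intro l2 h2F h2ne0 h2ne1 k hk
        have hk' : k < p.length := by omega
        have h02 : l0.getD k 0 ≠ l2.getD k 0 :=
          hpw (Finset.mem_coe.mpr hl0F) (Finset.mem_coe.mpr h2F) (Ne.symm h2ne0) k (by omega)
        have h12 : l1.getD k 0 ≠ l2.getD k 0 :=
          hpw (Finset.mem_coe.mpr hl1F) (Finset.mem_coe.mpr h2F) (Ne.symm h2ne1) k (by omega)
        rw [hgmx k hk']
        rcases max_choice (l0.getD k 0) (l1.getD k 0) with h | h <;> rw [h] <;> assumption
      have hmnmx : NonOverlap mn mx := by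
        intro k hk
        have hk' : k < p.length := by omega
        rw [hgmn k hk', hgmx k hk']
        exact ne_of_lt (min_lt_max.mpr (hne01 k hk'))
      have hlsmx : NonOverlap lstar mx := by
        intro k hk
        have hk' : k < p.length := by omega
        rw [hgmx k hk']
        exact ne_of_lt (lt_of_le_of_lt
          (le_min (hco l0 hocc0 k hk') (hco l1 hocc1 k hk'))
          (min_lt_max.mpr (hne01 k hk')))
      set rest := (F.erase l0).erase l1 with hrest
      have hl1e : l1 ∈ F.erase l0 := Finset.mem_erase.mpr ⟨hl1ne, hl1F⟩
      have hrestmem : ∀ l2 ∈ rest, l2 ∈ F ∧ l2 ≠ l0 ∧ l2 ≠ l1 := by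
        intro l2 h2
        rw [hrest] at h2
        have h2' := Finset.mem_erase.mp h2
        have h2'' := Finset.mem_erase.mp h2'.2
        exact ⟨h2''.2, h2''.1, h2'.1⟩
      have hmnnemx : mn ≠ mx := by
        intro h
        have hcon := hmnmx 0 (by omega)
        rw [h] at hcon
        exact hcon rfl
      have hmxrest : mx ∉ rest := by
        intro h
        obtain ⟨h2F, h2ne0, h2ne1⟩ := hrestmem mx h
        exact hmxvs mx h2F h2ne0 h2ne1 0 (by omega) rfl
      have hmnrest : mn ∉ rest := by
        intro h
        obtain ⟨h2F, h2ne0, h2ne1⟩ := hrestmem mn h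
        exact hmnvs mn h2F h2ne0 h2ne1 0 (by omega) rfl
      set F2 := insert mn (insert mx rest) with hF2
      have hcard2 : F2.card = F.card := by
        have h2le : 2 ≤ F.card := Finset.one_lt_card.mpr ⟨l1, hl1F, l0, hl0F, hl1ne⟩
        have e1 : (F.erase l0).card = F.card - 1 := Finset.card_erase_of_mem hl0F
        have e2 : rest.card = (F.erase l0).card - 1 := Finset.card_erase_of_mem hl1e
        have e3 : (insert mx rest).card = rest.card + 1 := Finset.card_insert_of_notMem hmxrest
        have e4 : F2.card = (insert mx rest).card + 1 := Finset.card_insert_of_notMem (by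
          simp only [Finset.mem_insert]
          rintro (h | h)
          exacts [hmnnemx h, hmnrest h])
        omega
      have hocc2 : ∀ l ∈ F2, IsOcc s p l := by
        intro l hl
        rw [hF2] at hl
        rcases Finset.mem_insert.mp hl with rfl | hl
        · exact hoccmn
        rcases Finset.mem_insert.mp hl with rfl | hl
        · exact hoccmx
        · exact hocc l (hrestmem l hl).1
      have hpw2 : (F2 : Set (List ℕ)).Pairwise NonOverlap := by
        have hlen2 : ∀ l2 ∈ rest, l2.length = p.length :=
          fun l2 h2 => (hocc l2 (hrestmem l2 h2).1).1
        intro a ha b hb hne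
        rw [hF2] at ha hb
        simp only [Finset.coe_insert, Set.mem_insert_iff, Finset.mem_coe] at ha hb
        rcases ha with rfl | rfl | ha <;> rcases hb with rfl | rfl | hb
        · exact absurd rfl hne
        · exact hmnmx
        · exact hmnvs b (hrestmem b hb).1 (hrestmem b hb).2.1 (hrestmem b hb).2.2
        · exact nonOverlap_symm (by rw [hlenmn, hlenmx]) hmnmx
        · exact absurd rfl hne
        · exact hmxvs b (hrestmem b hb).1 (hrestmem b hb).2.1 (hrestmem b hb).2.2
        · exact nonOverlap_symm (by rw [hlenmn, hlen2 a ha])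
            (hmnvs a (hrestmem a ha).1 (hrestmem a ha).2.1 (hrestmem a ha).2.2)
        · exact nonOverlap_symm (by rw [hlenmx, hlen2 a ha])
            (hmxvs a (hrestmem a ha).1 (hrestmem a ha).2.1 (hrestmem a ha).2.2)
        · exact hpw (Finset.mem_coe.mpr (hrestmem a ha).1)
            (Finset.mem_coe.mpr (hrestmem b hb).1) hne
      have hl0O : l0 ∈ O := Finset.mem_filter.mpr ⟨hl0F, hl0ov⟩
      have hl1O : l1 ∈ O := Finset.mem_filter.mpr ⟨hl1F, hl1ov⟩
      have hl1Oe : l1 ∈ O.erase l0 := Finset.mem_erase.mpr ⟨hl1ne, hl1O⟩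
      have hsub : F2.filter (fun l => ¬ NonOverlap lstar l) ⊆
          insert mn ((O.erase l0).erase l1) := by
        intro x hx
        obtain ⟨hxF2, hxov⟩ := Finset.mem_filter.mp hx
        rw [hF2] at hxF2
        rcases Finset.mem_insert.mp hxF2 with rfl | hxF2
        · exact Finset.mem_insert_self _ _
        rcases Finset.mem_insert.mp hxF2 with rfl | hxF2
        · exact absurd hlsmx hxov
        · obtain ⟨hxF, hxne0, hxne1⟩ := hrestmem x hxF2
          exact Finset.mem_insert_of_mem (Finset.mem_erase.mpr ⟨hxne1,
            Finset.mem_erase.mpr ⟨hxne0, Finset.mem_filter.mpr ⟨hxF, hxov⟩⟩⟩)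
      have hcount : (F2.filter (fun l => ¬ NonOverlap lstar l)).card ≤ n := by
        have h2le : 2 ≤ O.card := Finset.one_lt_card.mpr ⟨l1, hl1O, l0, hl0O, hl1ne⟩
        have hsc := Finset.card_le_card hsub
        have hc1 := Finset.card_insert_le mn ((O.erase l0).erase l1)
        have e1 := Finset.card_erase_of_mem hl0O
        have e2 := Finset.card_erase_of_mem hl1Oe
        omega
      obtain ⟨F', m1, m2, m3, m4⟩ := ih F2 hcount hocc2 hpw2
      exact ⟨F', m1, m2, m3, by omega⟩
    · push_neg at htwo
      have hno : ∀ l ∈ F.erase l0, NonOverlap lstar l := by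
        intro l hl
        obtain ⟨hne, hlF⟩ := Finset.mem_erase.mp hl
        exact htwo l hlF hne
      obtain ⟨m1, m2, m3, m4⟩ := insert_lstar h1 (F.erase l0)
        (fun l hl => hocc l (Finset.mem_of_mem_erase hl))
        (hpw.mono (Finset.coe_subset.mpr (Finset.erase_subset _ _)))
        hno (fun h => hls (Finset.mem_of_mem_erase h))
      have e1 : (F.erase l0).card = F.card - 1 := Finset.card_erase_of_mem hl0F
      have hpos : 1 ≤ F.card := Finset.card_pos.mpr ⟨l0, hl0F⟩
      exact ⟨insert lstar (F.erase l0), m1, m2, m3, by omega⟩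

theorem stmt9 (s p : List (Finset ℕ)) (lstar : List ℕ) (h1 : IsOcc s p lstar)
    (hmin : ∀ l, IsOcc s p l → lstar = l ∨ List.Lex (· < ·) lstar l) :
    ∃ F : Finset (List ℕ), lstar ∈ F ∧ (∀ l ∈ F, IsOcc s p l) ∧
      (F : Set (List ℕ)).Pairwise NonOverlap ∧ F.card = supp s p := by
  have hbdd := bddS s p
  have h0 : (0 : ℕ) ∈ {k | ∃ F : Finset (List ℕ), F.card = k ∧ (∀ l ∈ F, IsOcc s p l) ∧
      (F : Set (List ℕ)).Pairwise NonOverlap} := ⟨∅, by simp, by simp, by simp⟩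
  have hsup : supp s p ∈ {k | ∃ F : Finset (List ℕ), F.card = k ∧ (∀ l ∈ F, IsOcc s p l) ∧
      (F : Set (List ℕ)).Pairwise NonOverlap} := Nat.sSup_mem ⟨0, h0⟩ hbdd
  obtain ⟨F, hcard, hocc, hpw⟩ := hsup
  have hco : ∀ l, IsOcc s p l → ∀ k, k < p.length → lstar.getD k 0 ≤ l.getD k 0 :=
    fun l hl => lstar_coord_min h1 hmin hl
  obtain ⟨F', m1, m2, m3, m4⟩ := exchange s p lstar h1 hco
    (F.filter (fun l => ¬ NonOverlap lstar l)).card F le_rfl hocc hpw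
  refine ⟨F', m1, m2, m3, ?_⟩
  have hub : F'.card ≤ supp s p := le_csSup hbdd ⟨F', rfl, m2, m3⟩
  omega
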